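/- Let G be a finite simple undirected graph with no isolated vertices, let v be a unit eigenvector of L with eigenvalue λ that is orthogonal to D^{1/2}𝟙, and let x = D^{-1/2} v (so ‖x‖_∞ > 0). Let c be a real constant and let (w(u))_{u∈V(G)} be pairwise independent {0,1}-valued random variables such that E[w(u)] = c + x(u)/(2‖x‖_∞) for every u (in particular these values lie in [0,1]). Then E[(D^{1/2}w)^T (I − L)(D^{1/2}w)] = E[w^T A w] = c² · vol(G) + (1 − λ)/(4‖x‖_∞²). -/

import Mathlib

open Matrix Finset MeasureTheory ProbabilityTheory

/-- The degree-based volume of a vertex subset: the sum of the degrees of its vertices. -/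
def gvol {n : ℕ} (G : SimpleGraph (Fin n)) [DecidableRel G.Adj] (S : Finset (Fin n)) : ℕ :=
  ∑ v ∈ S, G.degree v

/-- The diagonal matrix `D^{1/2}` of square roots of the vertex degrees. -/
noncomputable def dHalf {n : ℕ} (G : SimpleGraph (Fin n)) [DecidableRel G.Adj] :
    Matrix (Fin n) (Fin n) ℝ :=
  Matrix.diagonal fun v => Real.sqrt (G.degree v)

/-- The diagonal matrix `D^{-1/2}` of inverse square roots of the vertex degrees. -/
noncomputable def dHalfInv {n : ℕ} (G : SimpleGraph (Fin n)) [DecidableRel G.Adj] :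
    Matrix (Fin n) (Fin n) ℝ :=
  Matrix.diagonal fun v => (Real.sqrt (G.degree v))⁻¹

/-- The normalized Laplacian `D^{-1/2} (D - A) D^{-1/2}`. -/
noncomputable def normLap {n : ℕ} (G : SimpleGraph (Fin n)) [DecidableRel G.Adj] :
    Matrix (Fin n) (Fin n) ℝ :=
  dHalfInv G * G.lapMatrix ℝ * dHalfInv G

/-- Swap the two vectors in a quadratic form with a symmetric matrix. -/
lemma dot_symm {n : ℕ} (M : Matrix (Fin n) (Fin n) ℝ) (hM : Mᵀ = M) (a b : Fin n → ℝ) :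
    a ⬝ᵥ M *ᵥ b = b ⬝ᵥ M *ᵥ a := by
  rw [dotProduct_mulVec, ← mulVec_transpose, hM, dotProduct_comm]

/-- Sandwich a quadratic form with a diagonal matrix. -/
lemma diag_sandwich {n : ℕ} (d : Fin n → ℝ) (P : Matrix (Fin n) (Fin n) ℝ) (y : Fin n → ℝ) :
    (Matrix.diagonal d *ᵥ y) ⬝ᵥ (P *ᵥ (Matrix.diagonal d *ᵥ y))
      = y ⬝ᵥ ((Matrix.diagonal d * P * Matrix.diagonal d) *ᵥ y) := by
  have h1 : Matrix.diagonal d *ᵥ y = y ᵥ* Matrix.diagonal d := by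
    funext i; simp [mulVec_diagonal, vecMul_diagonal, mul_comm]
  rw [mulVec_mulVec, h1, dotProduct_mulVec, vecMul_vecMul, dotProduct_mulVec, mul_assoc]

/-- A measurable function bounded by 1 on a probability space is integrable. -/
lemma int_bdd {Ω : Type*} [MeasureSpace Ω] [IsProbabilityMeasure (ℙ : Measure Ω)]
    (f : Ω → ℝ) (hf : Measurable f) (hb : ∀ ω, |f ω| ≤ 1) : Integrable f := by
  exact (integrable_const 1).mono' hf.aestronglyMeasurable (ae_of_all _ fun ω => by
    simpa using hb ω)

/-- Let `G` have no isolated vertices, let `v` be a unit eigenvector of the normalized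
Laplacian with eigenvalue `λ`, orthogonal to `D^{1/2}𝟙`, and let `x = D^{-1/2} v`, with
`‖x‖_∞` its sup-norm. If `(w(u))_u` are pairwise independent `{0,1}`-valued random
variables with `E[w(u)] = c + x(u)/(2‖x‖_∞)`, then
`E[(D^{1/2}w)ᵀ(I - L)(D^{1/2}w)] = E[wᵀ A w] = c²·vol(G) + (1 - λ)/(4‖x‖_∞²)`. -/
theorem expectation_quadform_random_partition {n : ℕ} (hn : 0 < n)
    (G : SimpleGraph (Fin n)) [DecidableRel G.Adj]
    (hdeg : ∀ u, 0 < G.degree u)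
    (lam : ℝ) (v : Fin n → ℝ)
    (hunit : v ⬝ᵥ v = 1)
    (horth : v ⬝ᵥ (dHalf G).mulVec (fun _ => 1) = 0)
    (heig : (normLap G).mulVec v = lam • v)
    (x : Fin n → ℝ) (hx : x = (dHalfInv G).mulVec v)
    (xinf : ℝ)
    (hxinf : xinf = Finset.univ.sup' (Finset.univ_nonempty_iff.mpr ⟨⟨0, hn⟩⟩)
      (fun u => |x u|))
    {Ω : Type*} [MeasureSpace Ω] [IsProbabilityMeasure (ℙ : Measure Ω)]
    (w : Ω → Fin n → ℝ)
    (hmeas : ∀ u, Measurable fun ω => w ω u)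
    (h01 : ∀ u ω, w ω u = 0 ∨ w ω u = 1)
    (hindep : ∀ u u', u ≠ u' → IndepFun (fun ω => w ω u) (fun ω => w ω u'))
    (c : ℝ) (hmean : ∀ u, (∫ ω, w ω u) = c + x u / (2 * xinf)) :
    (∫ ω, ((dHalf G).mulVec (w ω)) ⬝ᵥ
        ((1 - normLap G).mulVec ((dHalf G).mulVec (w ω))))
      = (∫ ω, (w ω) ⬝ᵥ (G.adjMatrix ℝ).mulVec (w ω)) ∧
    (∫ ω, (w ω) ⬝ᵥ (G.adjMatrix ℝ).mulVec (w ω))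
      = c ^ 2 * (gvol G Finset.univ : ℝ) + (1 - lam) / (4 * xinf ^ 2) := by
  have hs : ∀ u, (0:ℝ) < Real.sqrt (G.degree u) := fun u =>
    Real.sqrt_pos.mpr (by exact_mod_cast hdeg u)
  -- basic matrix identities
  have hDhalfmul : dHalf G * dHalfInv G = 1 := by
    rw [dHalf, dHalfInv, diagonal_mul_diagonal,
      show (fun v => Real.sqrt (G.degree v) * (Real.sqrt (G.degree v))⁻¹) = fun _ => (1:ℝ)
        from funext fun u => mul_inv_cancel₀ (hs u).ne', Matrix.diagonal_one]
  have hInvHalf : dHalfInv G * dHalf G = 1 := by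
    rw [dHalfInv, dHalf, diagonal_mul_diagonal,
      show (fun v => (Real.sqrt (G.degree v))⁻¹ * Real.sqrt (G.degree v)) = fun _ => (1:ℝ)
        from funext fun u => inv_mul_cancel₀ (hs u).ne', Matrix.diagonal_one]
  have hDD : dHalf G * dHalf G = G.degMatrix ℝ := by
    rw [dHalf, SimpleGraph.degMatrix, diagonal_mul_diagonal]
    rw [show (fun i => Real.sqrt (G.degree i) * Real.sqrt (G.degree i))
        = fun i => ((G.degree i : ℝ)) from
      funext fun u => Real.mul_self_sqrt (Nat.cast_nonneg _)]
  have hDInv : G.degMatrix ℝ * dHalfInv G = dHalf G := by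
    have key : ∀ u : Fin n, ((G.degree u : ℝ)) * (Real.sqrt (G.degree u))⁻¹
        = Real.sqrt (G.degree u) := by
      intro u
      have hne := (hs u).ne'
      field_simp
      rw [Real.sq_sqrt (Nat.cast_nonneg _)]
    rw [SimpleGraph.degMatrix, dHalfInv, dHalf, diagonal_mul_diagonal]
    rw [show (fun i => ((G.degree i : ℝ)) * (Real.sqrt (G.degree i))⁻¹)
        = fun i => Real.sqrt (G.degree i) from funext key]
  have hAmat : dHalf G * (1 - normLap G) * dHalf G = G.adjMatrix ℝ := by
    have e : dHalf G * (dHalfInv G * G.lapMatrix ℝ * dHalfInv G) * dHalf G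
        = G.lapMatrix ℝ := by
      calc dHalf G * (dHalfInv G * G.lapMatrix ℝ * dHalfInv G) * dHalf G
          = (dHalf G * dHalfInv G) * G.lapMatrix ℝ * (dHalfInv G * dHalf G) := by
            noncomm_ring
        _ = G.lapMatrix ℝ := by rw [hDhalfmul, hInvHalf, one_mul, mul_one]
    rw [normLap, mul_sub, mul_one, sub_mul, e, hDD, SimpleGraph.lapMatrix, sub_sub_cancel]
  -- eigen-equation transported to x
  have hAx : G.adjMatrix ℝ *ᵥ x = (1 - lam) • (dHalf G *ᵥ v) := by
    have h5 : G.lapMatrix ℝ *ᵥ x = lam • (dHalf G *ᵥ v) := by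
      have h := congrArg (fun y => dHalf G *ᵥ y) heig
      simp only [mulVec_smul] at h
      rw [mulVec_mulVec, normLap] at h
      have e : dHalf G * (dHalfInv G * G.lapMatrix ℝ * dHalfInv G)
          = G.lapMatrix ℝ * dHalfInv G := by
        calc dHalf G * (dHalfInv G * G.lapMatrix ℝ * dHalfInv G)
            = (dHalf G * dHalfInv G) * (G.lapMatrix ℝ * dHalfInv G) := by noncomm_ring
          _ = G.lapMatrix ℝ * dHalfInv G := by rw [hDhalfmul, one_mul]
      rw [e, ← mulVec_mulVec, ← hx] at h
      exact h
    have hDx : G.degMatrix ℝ *ᵥ x = dHalf G *ᵥ v := by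
      rw [hx, mulVec_mulVec, hDInv]
    rw [SimpleGraph.lapMatrix, sub_mulVec, hDx] at h5
    have : G.adjMatrix ℝ *ᵥ x = dHalf G *ᵥ v - lam • (dHalf G *ᵥ v) := by
      rw [← h5]; abel
    rw [this, sub_smul, one_smul]
  -- key dot products
  set one : Fin n → ℝ := fun _ => 1 with hone_def
  have hAsym : (G.adjMatrix ℝ)ᵀ = G.adjMatrix ℝ := (SimpleGraph.isSymm_adjMatrix G)
  have hdot1 : one ⬝ᵥ (dHalf G *ᵥ v) = 0 := by
    rw [dHalf, dot_symm _ (Matrix.diagonal_transpose _) one v, ← dHalf]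
    exact horth
  have hxv : x ⬝ᵥ (dHalf G *ᵥ v) = 1 := by
    rw [hx, ← hunit]
    simp only [dHalf, dHalfInv, dotProduct, mulVec_diagonal]
    refine Finset.sum_congr rfl fun u _ => ?_
    have h := (hs u).ne'
    field_simp
  have h1 : one ⬝ᵥ (G.adjMatrix ℝ *ᵥ one) = (gvol G Finset.univ : ℝ) := by
    simp only [hone_def, dotProduct, one_mul, SimpleGraph.adjMatrix_mulVec_apply]
    rw [gvol]
    push_cast
    exact Finset.sum_congr rfl fun u _ => by
      rw [Finset.sum_const, nsmul_eq_mul, mul_one, SimpleGraph.degree]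
  have h2 : one ⬝ᵥ (G.adjMatrix ℝ *ᵥ x) = 0 := by
    rw [hAx, dotProduct_smul, smul_eq_mul, hdot1, mul_zero]
  have h3 : x ⬝ᵥ (G.adjMatrix ℝ *ᵥ one) = 0 := by
    rw [dot_symm _ hAsym]; exact h2
  have h4 : x ⬝ᵥ (G.adjMatrix ℝ *ᵥ x) = 1 - lam := by
    rw [hAx, dotProduct_smul, smul_eq_mul, hxv, mul_one]
  -- positivity of xinf
  have hxpos : 0 < xinf := by
    obtain ⟨u, hu⟩ : ∃ u, v u ≠ 0 := by
      by_contra h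
      push_neg at h
      simp [dotProduct, h] at hunit
    have hxu : x u ≠ 0 := by
      rw [hx]
      simp only [dHalfInv, mulVec_diagonal]
      exact mul_ne_zero (inv_ne_zero (hs u).ne') hu
    rw [hxinf]
    exact lt_of_lt_of_le (abs_pos.mpr hxu) (Finset.le_sup' (fun u => |x u|) (Finset.mem_univ u))
  -- the mean vector
  set p : Fin n → ℝ := fun u => c + x u / (2 * xinf) with hp_def
  -- integrability
  have intW : ∀ u, Integrable (fun ω => w ω u) := fun u =>
    int_bdd _ (hmeas u) (fun ω => by rcases h01 u ω with h | h <;> simp [h])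
  have intWW : ∀ u u', Integrable (fun ω => w ω u * w ω u') := fun u u' =>
    int_bdd _ ((hmeas u).mul (hmeas u')) (fun ω => by
      rcases h01 u ω with h | h <;> rcases h01 u' ω with h' | h' <;> simp [h, h'])
  -- expectation of the quadratic form equals quadratic form of the mean
  have hExp : (∫ ω, (w ω) ⬝ᵥ (G.adjMatrix ℝ).mulVec (w ω))
      = p ⬝ᵥ (G.adjMatrix ℝ *ᵥ p) := by
    have hexp : ∀ ω, (w ω) ⬝ᵥ (G.adjMatrix ℝ).mulVec (w ω)
        = ∑ u, ∑ u', (G.adjMatrix ℝ) u u' * (w ω u * w ω u') := by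
      intro ω
      simp only [dotProduct, mulVec, Finset.mul_sum]
      exact Finset.sum_congr rfl fun u _ => Finset.sum_congr rfl fun u' _ => by ring
    calc (∫ ω, (w ω) ⬝ᵥ (G.adjMatrix ℝ).mulVec (w ω))
        = ∫ ω, ∑ u, ∑ u', (G.adjMatrix ℝ) u u' * (w ω u * w ω u') :=
          integral_congr_ae (ae_of_all _ hexp)
      _ = ∑ u, ∑ u', (G.adjMatrix ℝ) u u' * (p u * p u') := by
          rw [integral_finset_sum Finset.univ (fun u _ => integrable_finset_sum Finset.univ
            fun u' _ => (intWW u u').const_mul ((G.adjMatrix ℝ) u u'))]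
          refine Finset.sum_congr rfl fun u _ => ?_
          rw [integral_finset_sum Finset.univ (fun u' _ => (intWW u u').const_mul ((G.adjMatrix ℝ) u u'))]
          refine Finset.sum_congr rfl fun u' _ => ?_
          rw [integral_const_mul]
          by_cases h : u = u'
          · subst h; simp [SimpleGraph.adjMatrix_apply]
          · have hmul := (hindep u u' h).integral_mul_eq_mul_integral (intW u).aestronglyMeasurable
              (intW u').aestronglyMeasurable
            rw [show (fun a => w a u * w a u')
                = (fun ω => w ω u) * (fun ω => w ω u') from rfl, hmul, hmean u, hmean u']
      _ = p ⬝ᵥ (G.adjMatrix ℝ *ᵥ p) := by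
          simp only [dotProduct, mulVec, Finset.mul_sum]
          exact Finset.sum_congr rfl fun u _ => Finset.sum_congr rfl fun u' _ => by ring
  -- compute the quadratic form of the mean
  have hpdecomp : p = c • one + (2 * xinf)⁻¹ • x := by
    funext u
    simp only [hp_def, hone_def, Pi.add_apply, Pi.smul_apply, smul_eq_mul]
    rw [div_eq_mul_inv]
    ring
  have hform : p ⬝ᵥ (G.adjMatrix ℝ *ᵥ p)
      = c ^ 2 * (gvol G Finset.univ : ℝ) + (1 - lam) / (4 * xinf ^ 2) := by
    rw [hpdecomp]
    simp only [mulVec_add, mulVec_smul, dotProduct_add, add_dotProduct,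
      smul_dotProduct, dotProduct_smul, smul_eq_mul]
    rw [h1, h2, h3, h4]
    have : xinf ≠ 0 := hxpos.ne'
    field_simp
    ring
  refine ⟨?_, hExp.trans hform⟩
  refine integral_congr_ae (ae_of_all _ fun ω => ?_)
  show (dHalf G *ᵥ w ω) ⬝ᵥ ((1 - normLap G) *ᵥ (dHalf G *ᵥ w ω)) = _
  rw [show (dHalf G *ᵥ w ω) ⬝ᵥ ((1 - normLap G) *ᵥ (dHalf G *ᵥ w ω))
      = w ω ⬝ᵥ ((dHalf G * (1 - normLap G) * dHalf G) *ᵥ w ω) from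
    diag_sandwich _ _ _, hAmat]
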